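/- Let n ≥ 1 and 0 ≤ k ≤ n-2. Every partial permutation of {1,...,n} whose image has size k is the restriction of some even permutation of {1,...,n}. -/

import Mathlib

/-- Every partial permutation of {1,...,n} whose image has size k ≤ n-2 is the
restriction of some even permutation. -/
theorem low_rank_restriction_of_even (n k : ℕ) (hn : 1 ≤ n) (hk : k ≤ n - 2)
    (α : Fin n → Option (Fin n))
    (hα : ∀ a b c : Fin n, α a = some c → α b = some c → a = b)
    (himg : Nat.card {b : Fin n // ∃ a, α a = some b} = k) :
    ∃ σ : Equiv.Perm (Fin n), Equiv.Perm.sign σ = 1 ∧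
      ∀ a b : Fin n, α a = some b → σ a = b := by
  classical
  rcases lt_or_ge n 2 with h2 | h2
  · have hn1 : n = 1 := by omega
    subst hn1
    exact ⟨1, by simp, fun a b _ => Subsingleton.elim _ _⟩
  · set p : Fin n → Prop := fun a => (α a).isSome with hp
    set q : Fin n → Prop := fun b => ∃ a, α a = some b with hq
    let f : {a // p a} → {b // q b} := fun a =>
      ⟨(α a.1).get a.2, a.1, (Option.some_get a.2).symm⟩
    have hfb : Function.Bijective f := by
      constructor
      · rintro ⟨a, ha⟩ ⟨a', ha'⟩ h
        simp only [f, Subtype.mk.injEq] at h ⊢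
        exact hα a a' _ ((Option.some_get ha).symm)
          (by rw [h]; exact (Option.some_get ha').symm)
      · rintro ⟨b, a, hab⟩
        have ha : p a := by simp [hp, hab]
        refine ⟨⟨a, ha⟩, ?_⟩
        simp only [f, Subtype.mk.injEq]
        simp [hab]
    let e : {a // p a} ≃ {b // q b} := Equiv.ofBijective f hfb
    have hcardq : Fintype.card {b // q b} = k := by
      rw [← Nat.card_eq_fintype_card]
      exact himg
    have hcardp : Fintype.card {a // p a} = k := by
      rw [Fintype.card_congr e, hcardq]
    have hcardqc : Fintype.card {b // ¬ q b} = n - k := by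
      rw [Fintype.card_subtype_compl, hcardq, Fintype.card_fin]
    have hcardpc : Fintype.card {a // ¬ p a} = n - k := by
      rw [Fintype.card_subtype_compl, hcardp, Fintype.card_fin]
    let g : {a // ¬ p a} ≃ {b // ¬ q b} := Fintype.equivOfCardEq (by rw [hcardpc, hcardqc])
    let σ₀ : Equiv.Perm (Fin n) :=
      (Equiv.sumCompl p).symm.trans ((e.sumCongr g).trans (Equiv.sumCompl q))
    have hσ₀ : ∀ a b : Fin n, α a = some b → σ₀ a = b := by
      intro a b hab
      have ha : p a := by simp [hp, hab]
      have h1 : (Equiv.sumCompl p).symm a = Sum.inl ⟨a, ha⟩ :=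
        Equiv.sumCompl_symm_apply_of_pos ha
      have : σ₀ a = (e ⟨a, ha⟩ : Fin n) := by
        simp only [σ₀, Equiv.trans_apply, h1, Equiv.sumCongr_apply, Sum.map_inl,
          Equiv.sumCompl_apply_inl]
      rw [this]
      show ((f ⟨a, ha⟩ : {b // q b}) : Fin n) = b
      simp [f, hab]
    have h2k : 2 ≤ n - k := by omega
    obtain ⟨x, y, hxy⟩ : ∃ x y : {b // ¬ q b}, x ≠ y := by
      rw [← Fintype.one_lt_card_iff]
      omega
    by_cases hs : Equiv.Perm.sign σ₀ = 1
    · exact ⟨σ₀, hs, hσ₀⟩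
    · have hs' : Equiv.Perm.sign σ₀ = -1 :=
        (Int.units_eq_one_or _).resolve_left hs
      have hxy' : (x : Fin n) ≠ (y : Fin n) := fun h => hxy (Subtype.ext h)
      refine ⟨Equiv.swap (x : Fin n) (y : Fin n) * σ₀, ?_, ?_⟩
      · rw [Equiv.Perm.sign_mul, Equiv.Perm.sign_swap hxy', hs']
        decide
      · intro a b hab
        have hb : q b := ⟨a, hab⟩
        have hbx : b ≠ (x : Fin n) := fun h => x.2 (h ▸ hb)
        have hby : b ≠ (y : Fin n) := fun h => y.2 (h ▸ hb)
        rw [Equiv.Perm.mul_apply, hσ₀ a b hab, Equiv.swap_apply_of_ne_of_ne hbx hby]
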